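/- For every n ≥ 1 there is a set A ⊆ 𝔽₃ⁿ such that for every subspace V ≤ 𝔽₃ⁿ of positive dimension, sup_{r ∉ V^⊥} |(1_A μ_V)^∧(r)| ≥ √3/6. Explicitly, one may take A = {x ∈ 𝔽₃ⁿ : ∃ i with x₁ = ⋯ = x_i = 0 and x_{i+1} = 1} (where i ranges over 0 ≤ i ≤ n−1). -/

import Mathlib

open scoped Classical
open Finset
noncomputable section

/-- Dot product on `𝔽₃ⁿ`. -/
def dot3 {n : ℕ} (r x : Fin n → ZMod 3) : ZMod 3 := ∑ i, r i * x i

/-- The additive character `t ↦ e^{-2πit/3}` of `𝔽₃`. -/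
def chi3 (t : ZMod 3) : ℂ :=
  Complex.exp (-(2 * Real.pi * Complex.I) * (t.val : ℂ) / 3)

/-- `(1_A μ_V)^∧(r) = |V|⁻¹ ∑_{v ∈ V} 1_A(v) e^{-2πi (r·v)/3}`. -/
def fsub3 {n : ℕ} (A : Set (Fin n → ZMod 3))
    (V : Submodule (ZMod 3) (Fin n → ZMod 3)) (r : Fin n → ZMod 3) : ℂ :=
  (∑ v : V, if (v : Fin n → ZMod 3) ∈ A then
      chi3 (dot3 r (v : Fin n → ZMod 3)) else 0) / (Fintype.card V)

lemma chi3_eq (t : ZMod 3) :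
    chi3 t = Complex.exp (((-(2 * Real.pi * t.val) / 3 : ℝ) : ℂ) * Complex.I) := by
  unfold chi3; congr 1; push_cast; ring

lemma chi3_im (t : ZMod 3) : (chi3 t).im = Real.sin (-(2 * Real.pi * t.val) / 3) := by
  rw [chi3_eq, Complex.exp_ofReal_mul_I_im]

lemma chi3_im_zero : (chi3 0).im = 0 := by
  rw [chi3_im]; simp

lemma chi3_im_one : (chi3 1).im = -(Real.sqrt 3 / 2) := by
  rw [chi3_im]
  have hv : ((1 : ZMod 3)).val = 1 := rfl
  rw [hv]
  have h1 : (-(2 * Real.pi * (1:ℕ)) / 3 : ℝ) = -(Real.pi - Real.pi / 3) := by push_cast; ring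
  rw [h1, Real.sin_neg, Real.sin_pi_sub, Real.sin_pi_div_three]

set_option maxHeartbeats 1000000 in
/-- Key estimate: if `A` contains the slice `{u ∈ V : u i = 1}` and is disjoint from
the slice `{u ∈ V : u i = 2}`, then `|(1_A μ_V)^∧(e_i)| ≥ √3/6`. -/
lemma key_bound {n : ℕ} (A : Set (Fin n → ZMod 3))
    (V : Submodule (ZMod 3) (Fin n → ZMod 3)) (i : Fin n) (v₀ : V)
    (hv₀ : (v₀ : Fin n → ZMod 3) i = 1)
    (hmem1 : ∀ u : V, (u : Fin n → ZMod 3) i = 1 → (u : Fin n → ZMod 3) ∈ A)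
    (hmem2 : ∀ u : V, (u : Fin n → ZMod 3) i = 2 → (u : Fin n → ZMod 3) ∉ A) :
    Real.sqrt 3 / 6 ≤ ‖fsub3 A V (Pi.single i 1)‖ := by
  have hdot : ∀ x : Fin n → ZMod 3, dot3 (Pi.single i 1) x = x i := by
    intro x
    unfold dot3
    simp [Pi.single_apply, ite_mul]
  -- the three fibers have equal cardinality
  have hcard : ∀ j : ZMod 3,
      (univ.filter fun u : V => (u : Fin n → ZMod 3) i = j).card
      = (univ.filter fun u : V => (u : Fin n → ZMod 3) i = 0).card := by
    intro j
    refine (Finset.card_equiv (Equiv.addRight (j • v₀)) ?_).symm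
    intro u
    simp only [mem_filter, mem_univ, true_and, Equiv.coe_addRight]
    constructor
    · intro h
      have h2 : ((u + j • v₀ : V) : Fin n → ZMod 3) i
          = (u : Fin n → ZMod 3) i + j * (v₀ : Fin n → ZMod 3) i := by simp
      rw [h2, h, hv₀, mul_one, zero_add]
    · intro h
      have h2 : ((u + j • v₀ : V) : Fin n → ZMod 3) i
          = (u : Fin n → ZMod 3) i + j * (v₀ : Fin n → ZMod 3) i := by simp
      rw [h2, hv₀, mul_one] at h
      have h' : (u : Fin n → ZMod 3) i + j = 0 + j := by rw [zero_add]; exact h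
      exact add_right_cancel h'
  have htot : Fintype.card V
      = 3 * (univ.filter fun u : V => (u : Fin n → ZMod 3) i = 0).card := by
    have h1 : (univ : Finset V).card
        = ∑ j : ZMod 3, (univ.filter fun u : V => (u : Fin n → ZMod 3) i = j).card :=
      Finset.card_eq_sum_card_fiberwise
        (f := fun u : V => (u : Fin n → ZMod 3) i) (t := univ) (fun x _ => mem_univ _)
    rw [Finset.card_univ] at h1
    rw [h1, Finset.sum_congr rfl (fun j _ => hcard j), Finset.sum_const, Finset.card_univ]
    simp [ZMod.card]
  -- imaginary part of each summand
  have hterm : ∀ u : V, (if (u : Fin n → ZMod 3) ∈ A then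
      chi3 (dot3 (Pi.single i 1) (u : Fin n → ZMod 3)) else 0).im
      = if (u : Fin n → ZMod 3) i = 1 then -(Real.sqrt 3 / 2) else 0 := by
    intro u
    rw [hdot]
    have trich : (u : Fin n → ZMod 3) i = 0 ∨ (u : Fin n → ZMod 3) i = 1
        ∨ (u : Fin n → ZMod 3) i = 2 := by
      have h3 : ∀ t : ZMod 3, t = 0 ∨ t = 1 ∨ t = 2 := by decide
      exact h3 _
    rcases trich with h | h | h
    · rw [h, if_neg (by decide : ¬((0:ZMod 3) = 1))]
      split_ifs with h1
      · exact chi3_im_zero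
      · simp
    · rw [h, if_pos rfl, if_pos (hmem1 u h)]
      exact chi3_im_one
    · rw [h, if_neg (by decide : ¬((2:ZMod 3) = 1)), if_neg (hmem2 u h)]
      simp
  -- imaginary part of the exponential sum
  have him : (∑ v : V, if (v : Fin n → ZMod 3) ∈ A then
      chi3 (dot3 (Pi.single i 1) (v : Fin n → ZMod 3)) else 0).im
      = -(((univ.filter fun u : V => (u : Fin n → ZMod 3) i = 1).card : ℝ)
          * (Real.sqrt 3 / 2)) := by
    rw [Complex.im_sum, Finset.sum_congr rfl (fun u _ => hterm u),
      ← Finset.sum_filter, Finset.sum_const, nsmul_eq_mul]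
    ring
  have habs : Real.sqrt 3 / 2
      * ((univ.filter fun u : V => (u : Fin n → ZMod 3) i = 1).card : ℝ)
      ≤ ‖(∑ v : V, if (v : Fin n → ZMod 3) ∈ A then
          chi3 (dot3 (Pi.single i 1) (v : Fin n → ZMod 3)) else 0)‖ := by
    have h1 := Complex.abs_im_le_norm (∑ v : V, if (v : Fin n → ZMod 3) ∈ A then
      chi3 (dot3 (Pi.single i 1) (v : Fin n → ZMod 3)) else 0)
    rw [him, abs_neg, abs_of_nonneg (by positivity)] at h1
    linarith
  have hfs : fsub3 A V (Pi.single i 1)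
      = (∑ v : V, if (v : Fin n → ZMod 3) ∈ A then
          chi3 (dot3 (Pi.single i 1) (v : Fin n → ZMod 3)) else 0)
        / (Fintype.card V : ℂ) := rfl
  rw [hfs, norm_div, Complex.norm_natCast, htot]
  rw [hcard 1] at habs
  have hcpos : 0 < (univ.filter fun u : V => (u : Fin n → ZMod 3) i = 0).card := by
    rw [← hcard 1]
    exact Finset.card_pos.mpr ⟨v₀, by simp only [mem_filter, mem_univ, true_and]; exact hv₀⟩
  set c := (univ.filter fun u : V => (u : Fin n → ZMod 3) i = 0).card with hc
  have hcast : ((3 * c : ℕ) : ℝ) = 3 * (c : ℝ) := by push_cast; ring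
  rw [hcast]
  have hrw : Real.sqrt 3 / 6 = (Real.sqrt 3 / 2 * (c : ℝ)) / (3 * (c : ℝ)) := by
    have hc0 : (c : ℝ) ≠ 0 := by positivity
    field_simp
    ring
  rw [hrw]
  gcongr

/-- over `𝔽₃` there is a set which is not `√3/6`-uniform on any
subspace of positive dimension; one may take
`A = {x : ∃ i, x₁ = ⋯ = x_i = 0, x_{i+1} = 1}`. -/
theorem no_uniform_subspace_F3 (n : ℕ) (hn : 1 ≤ n) :
    ∃ A : Set (Fin n → ZMod 3),
      A = {x : Fin n → ZMod 3 | ∃ i : Fin n, (∀ k < i, x k = 0) ∧ x i = 1} ∧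
      ∀ V : Submodule (ZMod 3) (Fin n → ZMod 3), 0 < Module.finrank (ZMod 3) V →
        ∃ r : Fin n → ZMod 3, (∃ v ∈ V, dot3 r v ≠ 0) ∧
          Real.sqrt 3 / 6 ≤ ‖fsub3 A V r‖ := by
  refine ⟨{x : Fin n → ZMod 3 | ∃ i : Fin n, (∀ k < i, x k = 0) ∧ x i = 1}, rfl, ?_⟩
  intro V hV
  -- V is nontrivial
  have hVne : V ≠ ⊥ := by
    intro h
    rw [h, finrank_bot] at hV
    exact lt_irrefl 0 hV
  obtain ⟨v, hvV, hv0⟩ := Submodule.exists_mem_ne_zero_of_ne_bot hVne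
  -- the minimal coordinate where V is nonzero
  have hTne : (univ.filter (fun k : Fin n => ∃ w ∈ V, w k ≠ 0)).Nonempty := by
    obtain ⟨k, hk⟩ := Function.ne_iff.mp hv0
    exact ⟨k, by simp only [mem_filter, mem_univ, true_and]; exact ⟨v, hvV, hk⟩⟩
  set i := (univ.filter (fun k : Fin n => ∃ w ∈ V, w k ≠ 0)).min' hTne with hidef
  have hi : ∃ w ∈ V, w i ≠ 0 := by
    have := Finset.min'_mem _ hTne
    simpa only [mem_filter, mem_univ, true_and] using this
  have hmin : ∀ w ∈ V, ∀ k, k < i → w k = 0 := by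
    intro w hw k hk
    by_contra h
    have hkT : k ∈ univ.filter (fun k : Fin n => ∃ w ∈ V, w k ≠ 0) := by
      simp only [mem_filter, mem_univ, true_and]; exact ⟨w, hw, h⟩
    exact absurd (Finset.min'_le _ k hkT) (not_le.mpr hk)
  obtain ⟨w, hwV, hwi⟩ := hi
  -- an element of V whose i-th coordinate is 1
  have hv₀ : ((⟨(w i)⁻¹ • w, V.smul_mem _ hwV⟩ : V) : Fin n → ZMod 3) i = 1 := by
    show ((w i)⁻¹ • w) i = 1
    simp only [Pi.smul_apply, smul_eq_mul]
    exact inv_mul_cancel₀ hwi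
  refine ⟨Pi.single i 1, ⟨w, hwV, ?_⟩, ?_⟩
  · have : dot3 (Pi.single i 1) w = w i := by
      unfold dot3
      simp [Pi.single_apply, ite_mul]
    rw [this]; exact hwi
  · refine key_bound _ V i ⟨(w i)⁻¹ • w, V.smul_mem _ hwV⟩ hv₀ ?_ ?_
    · intro u hu
      exact ⟨i, fun k hk => hmin u u.2 k hk, hu⟩
    · intro u hu hmem
      obtain ⟨j, hj0, hj1⟩ := hmem
      rcases lt_trichotomy j i with h | h | h
      · rw [hmin u u.2 j h] at hj1; exact absurd hj1 (by decide)
      · rw [h] at hj1; rw [hu] at hj1; exact absurd hj1 (by decide)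
      · rw [hj0 i h] at hu; exact absurd hu (by decide)
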